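/- Let (Θ, 𝓕, ν) be a probability space, l_1, …, l_N ∈ L²(ν), p ∈ ℝ^N a probability vector, w̃ ∈ ℝ^N, and u_1, …, u_N ∈ ℝ^J vectors such that max_{m,n} |∫ l_m l_n dν − u_mᵀ u_n| ≤ ε for some ε ≥ 0. Then |∫_Θ Σ_n p_n l_n(θ) dν(θ)| ≤ (‖Σ_n w̃_n u_n‖² + ‖w̃‖₁² ε)^{1/2} + (‖Σ_n (w̃_n − p_n) u_n‖² + ‖w̃ − p‖₁² ε)^{1/2}. (The deterministic core of Theorem 2: the expected full sample risk is bounded by computable random-projection quantities whenever the projected inner products are uniformly ε-accurate.) -/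

import Mathlib

open MeasureTheory
open scoped RealInnerProductSpace

lemma norm_sum_smul_sq {K : Type*} [NormedAddCommGroup K] [InnerProductSpace ℝ K]
    {N : ℕ} (v : Fin N → ℝ) (g : Fin N → K) :
    ‖∑ n, v n • g n‖ ^ 2 = ∑ m, ∑ n, v m * v n * ⟪g m, g n⟫ := by
  rw [← real_inner_self_eq_norm_sq, sum_inner]
  refine Finset.sum_congr rfl fun m _ => ?_
  rw [inner_sum]
  refine Finset.sum_congr rfl fun n _ => ?_
  rw [real_inner_smul_left, real_inner_smul_right]; ring

-- Hilbert space key lemma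
lemma key_norm_bound {H : Type*} [NormedAddCommGroup H] [InnerProductSpace ℝ H]
    {N J : ℕ} (f : Fin N → H) (u : Fin N → EuclideanSpace ℝ (Fin J)) (ε : ℝ) (hε : 0 ≤ ε)
    (h : ∀ m n, |⟪f m, f n⟫ - ⟪u m, u n⟫| ≤ ε) (v : Fin N → ℝ) :
    ‖∑ n, v n • f n‖ ≤ Real.sqrt (‖∑ n, v n • u n‖ ^ 2 + (∑ n, |v n|) ^ 2 * ε) := by
  have key : ‖∑ n, v n • f n‖ ^ 2 ≤ ‖∑ n, v n • u n‖ ^ 2 + (∑ n, |v n|) ^ 2 * ε := by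
    rw [norm_sum_smul_sq v f, norm_sum_smul_sq v u]
    have : ∑ m, ∑ n, v m * v n * ⟪f m, f n⟫ - ∑ m, ∑ n, v m * v n * ⟪u m, u n⟫
        = ∑ m, ∑ n, v m * v n * (⟪f m, f n⟫ - ⟪u m, u n⟫) := by
      rw [← Finset.sum_sub_distrib]
      refine Finset.sum_congr rfl fun m _ => ?_
      rw [← Finset.sum_sub_distrib]
      exact Finset.sum_congr rfl fun n _ => by ring
    have hb : ∑ m, ∑ n, v m * v n * (⟪f m, f n⟫ - ⟪u m, u n⟫) ≤ (∑ n, |v n|) ^ 2 * ε := by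
      calc ∑ m, ∑ n, v m * v n * (⟪f m, f n⟫ - ⟪u m, u n⟫)
          ≤ ∑ m, ∑ n, |v m| * |v n| * ε := by
            refine Finset.sum_le_sum fun m _ => Finset.sum_le_sum fun n _ => ?_
            calc v m * v n * (⟪f m, f n⟫ - ⟪u m, u n⟫)
                ≤ |v m * v n * (⟪f m, f n⟫ - ⟪u m, u n⟫)| := le_abs_self _
              _ = |v m| * |v n| * |⟪f m, f n⟫ - ⟪u m, u n⟫| := by
                  rw [abs_mul, abs_mul]
              _ ≤ |v m| * |v n| * ε := by
                  exact mul_le_mul_of_nonneg_left (h m n) (by positivity)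
        _ = (∑ n, |v n|) ^ 2 * ε := by
            rw [sq, Finset.sum_mul_sum]
            rw [Finset.sum_mul]
            refine Finset.sum_congr rfl fun m _ => ?_
            rw [Finset.sum_mul]
    linarith [this]
  calc ‖∑ n, v n • f n‖ = Real.sqrt (‖∑ n, v n • f n‖ ^ 2) := by
        rw [Real.sqrt_sq (norm_nonneg _)]
    _ ≤ Real.sqrt (‖∑ n, v n • u n‖ ^ 2 + (∑ n, |v n|) ^ 2 * ε) := Real.sqrt_le_sqrt key

theorem expected_risk_le_random_projection_bound
    {Θ : Type*} [MeasurableSpace Θ] (ν : Measure Θ) [IsProbabilityMeasure ν]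
    (N J : ℕ) (l : Fin N → Θ → ℝ) (hl : ∀ n, MemLp (l n) 2 ν)
    (p : Fin N → ℝ) (hp0 : ∀ n, 0 ≤ p n) (hp1 : ∑ n, p n = 1)
    (w : Fin N → ℝ)
    (u : Fin N → EuclideanSpace ℝ (Fin J))
    (ε : ℝ) (hε : 0 ≤ ε)
    (hu : ∀ m n, |(∫ θ, l m θ * l n θ ∂ν) - ⟪u m, u n⟫| ≤ ε) :
    |∫ θ, (∑ n, p n * l n θ) ∂ν| ≤
      Real.sqrt (‖∑ n, w n • u n‖ ^ 2 + (∑ n, |w n|) ^ 2 * ε) +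
      Real.sqrt (‖∑ n, (w n - p n) • u n‖ ^ 2 + (∑ n, |w n - p n|) ^ 2 * ε) := by
  classical
  set F : Fin N → Lp ℝ 2 ν := fun n => (hl n).toLp (l n) with hF
  -- coeFn of sums
  have hcoe : ∀ (v : Fin N → ℝ) (s : Finset (Fin N)),
      (↑↑(∑ n ∈ s, v n • F n) : Θ → ℝ) =ᵐ[ν] fun a => ∑ n ∈ s, v n * l n a := by
    intro v s
    induction s using Finset.induction_on with
    | empty => simp only [Finset.sum_empty]; exact Lp.coeFn_zero (E := ℝ) (p := 2) (μ := ν)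
    | insert _ _ hn ih =>
      rename_i a s
      rw [Finset.sum_insert hn]
      filter_upwards [Lp.coeFn_add (v a • F a) (∑ n ∈ s, v n • F n),
        Lp.coeFn_smul (v a) (F a), (hl a).coeFn_toLp, ih] with θ h1 h2 h3 h4
      simp only [Finset.sum_insert hn, h1, Pi.add_apply, h2, Pi.smul_apply, h3, h4,
        smul_eq_mul]
      simp only [hF, h3]
  -- inner products of F equal integrals
  have hinner : ∀ m n, ⟪F m, F n⟫ = ∫ θ, l m θ * l n θ ∂ν := by
    intro m n
    rw [L2.inner_def]
    refine integral_congr_ae ?_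
    filter_upwards [(hl m).coeFn_toLp, (hl n).coeFn_toLp] with θ h1 h2
    simp [h1, h2, RCLike.inner_apply]
    simp only [hF, h1, h2]; ring
  have hF' : ∀ m n, |⟪F m, F n⟫ - ⟪u m, u n⟫| ≤ ε := fun m n => by
    rw [hinner]; exact hu m n
  -- the constant one function
  have hone : MemLp (fun _ : Θ => (1 : ℝ)) 2 ν := memLp_const 1
  set one : Lp ℝ 2 ν := hone.toLp _ with honedef
  have hone_norm : ‖one‖ = 1 := by
    rw [honedef, Lp.norm_toLp, eLpNorm_const (1 : ℝ) (by norm_num) (by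
      simp [IsProbabilityMeasure.ne_zero ν])]
    simp
  -- |∫ Σ p l| = |⟪one, Σ p • F⟫| ≤ ‖Σ p • F‖
  have hint : ⟪one, ∑ n, p n • F n⟫ = ∫ θ, (∑ n, p n * l n θ) ∂ν := by
    rw [L2.inner_def]
    refine integral_congr_ae ?_
    filter_upwards [hone.coeFn_toLp, hcoe p Finset.univ] with θ h1 h2
    simp only [RCLike.inner_apply, conj_trivial, h1, h2, one_mul]
    rw [honedef, h1, mul_one]
  have step1 : |∫ θ, (∑ n, p n * l n θ) ∂ν| ≤ ‖∑ n, p n • F n‖ := by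
    rw [← hint]
    calc |⟪one, ∑ n, p n • F n⟫| ≤ ‖one‖ * ‖∑ n, p n • F n‖ := abs_real_inner_le_norm _ _
      _ = ‖∑ n, p n • F n‖ := by rw [hone_norm, one_mul]
  -- triangle inequality
  have step2 : ‖∑ n, p n • F n‖ ≤ ‖∑ n, w n • F n‖ + ‖∑ n, (w n - p n) • F n‖ := by
    have : ∑ n, p n • F n = (∑ n, w n • F n) - ∑ n, (w n - p n) • F n := by
      rw [← Finset.sum_sub_distrib]
      refine Finset.sum_congr rfl fun n _ => ?_
      rw [← sub_smul]; ring_nf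
    rw [this]
    exact (norm_sub_le _ _)
  refine step1.trans (step2.trans (add_le_add ?_ ?_))
  · exact key_norm_bound F u ε hε hF' w
  · exact key_norm_bound F u ε hε hF' (fun n => w n - p n)
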